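/- Let A be a C*-algebra, M and N Hilbert A-modules, T : M → N a bounded A-linear map. Suppose the graph G(T) is an orthogonal summand of M ⊕ N, i.e. M ⊕ N = G(T) ⊕ G(T)^⊥. Then T is adjointable: there exists a bounded A-linear map T* : N → M with ⟨T x, y⟩ = ⟨x, T* y⟩ for all x ∈ M, y ∈ N. -/

import Mathlib

open scoped RightActions InnerProductSpace
open WithCStarModule

lemma aux_norm_lower {A : Type*} [NonUnitalCStarAlgebra A] [PartialOrder A] [StarOrderedRing A]
    (b : A) (hb : 0 ≤ b) (K : ℝ) : ‖b‖^2 + K * ‖b‖ ≤ ‖b*b + K•b‖ := by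
  let B := Unitization ℂ A
  have hb' : (0 : B) ≤ (b : B) := by rwa [Unitization.inr_nonneg_iff]
  have hsa : IsSelfAdjoint (b : B) := .of_nonneg hb'
  have hmem : ‖(b : B)‖ ∈ spectrum ℝ (b : B) := CStarAlgebra.norm_mem_spectrum_of_nonneg hb'
  set t : ℝ := ‖(b : B)‖ with ht
  have hcfc : cfc (fun s : ℝ => s*s + K*s) (b : B) = (b : B)*(b : B) + K•(b : B) := by
    rw [cfc_add _ _ _ (by fun_prop) (by fun_prop), cfc_mul _ _ _ (by fun_prop) (by fun_prop),
      cfc_id' ℝ (b : B), cfc_const_mul _ _ _ (by fun_prop), cfc_id' ℝ (b : B)]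
  have hmem2 : t*t + K*t ∈ spectrum ℝ ((b : B)*(b : B) + K•(b : B)) := by
    rw [← hcfc, cfc_map_spectrum (fun s : ℝ => s*s + K*s) (b : B)]
    exact ⟨t, hmem, rfl⟩
  have hle : t*t + K*t ≤ ‖(b : B)*(b : B) + K•(b : B)‖ := by
    calc t*t + K*t ≤ ‖t*t + K*t‖ := Real.le_norm_self _
      _ ≤ _ := spectrum.norm_le_norm_of_mem hmem2
  have hcast : ((b*b + K•b : A) : B) = (b : B)*(b : B) + K•(b : B) := by
    simp [Unitization.inr_add, Unitization.inr_mul, Unitization.inr_smul]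
  rw [ht, Unitization.norm_inr] at hle
  calc ‖b‖^2 + K * ‖b‖ = ‖b‖*‖b‖ + K*‖b‖ := by ring
    _ ≤ ‖((b*b + K•b : A) : B)‖ := by rw [hcast]; exact hle
    _ = ‖b*b + K•b‖ := Unitization.norm_inr _


lemma aux_arith {t Q : ℝ} (ht0 : 0 ≤ t) (hQ0 : 0 ≤ Q) (h : t^2 + Q*t*t ≤ Q*t) :
    t * (1+Q) ≤ Q := by nlinarith [sq_nonneg t, mul_nonneg ht0 hQ0]

section helpers

variable {A : Type*} [NonUnitalCStarAlgebra A] [PartialOrder A] [StarOrderedRing A]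
  {E : Type*} [NormedAddCommGroup E] [NormedSpace ℂ E] [SMul A E] [CStarModule A E]

lemma my_ext_inner {u v : E} (h : ∀ z : E, ⟪z, u⟫_A = ⟪z, v⟫_A) : u = v := by
  have h0 : ⟪u - v, u - v⟫_A = 0 := by
    rw [CStarModule.inner_sub_right, h (u - v), sub_self]
  have h1 := CStarModule.inner_self.mp h0
  rwa [sub_eq_zero] at h1

lemma my_op_smul_zero (a : A) : (a • (0 : E)) = 0 :=
  my_ext_inner fun z => by
    rw [CStarModule.inner_op_smul_right, CStarModule.inner_zero_right, mul_zero]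

lemma my_op_smul_sub (a : A) (x y : E) :
    a • (x - y) = a • x - a • y :=
  my_ext_inner fun z => by
    rw [CStarModule.inner_op_smul_right, CStarModule.inner_sub_right,
      CStarModule.inner_sub_right,
      CStarModule.inner_op_smul_right, CStarModule.inner_op_smul_right, mul_sub]

end helpers

theorem stmt_3 {A : Type*} [NonUnitalCStarAlgebra A] [PartialOrder A] [StarOrderedRing A]
    {M : Type*} [NormedAddCommGroup M] [NormedSpace ℂ M] [SMul A M] [CStarModule A M]
    [CompleteSpace M]
    {N : Type*} [NormedAddCommGroup N] [NormedSpace ℂ N] [SMul A N] [CStarModule A N]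
    [CompleteSpace N]
    (T : M →L[ℂ] N)
    (hT : ∀ (a : A) (x : M), T (a • x) = a • T x)
    (hsumm : ∀ p : C⋆ᵐᵒᵈ(A, M × N), ∃ g z : C⋆ᵐᵒᵈ(A, M × N),
      (equiv A (M × N) g).2 = T (equiv A (M × N) g).1 ∧
      (∀ g' : C⋆ᵐᵒᵈ(A, M × N),
        (equiv A (M × N) g').2 = T (equiv A (M × N) g').1 → ⟪z, g'⟫_A = 0) ∧
      p = g + z) :
    ∃ S : N →L[ℂ] M,
      (∀ (a : A) (y : N), S (a • y) = a • S y) ∧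
      ∀ (x : M) (y : N), ⟪T x, y⟫_A = ⟪x, S y⟫_A := by
  classical
  choose P Z hPg hZ hPZ using hsumm
  simp only [WithCStarModule.equiv_fst, WithCStarModule.equiv_snd] at hPg hZ
  have hZ' : ∀ p : C⋆ᵐᵒᵈ(A, M × N), Z p = p - P p := by
    intro p
    rw [eq_sub_iff_add_eq, add_comm]
    exact (hPZ p).symm
  -- inner product on the product module
  have hinn : ∀ p q : C⋆ᵐᵒᵈ(A, M × N), ⟪p, q⟫_A = ⟪p.1, q.1⟫_A + ⟪p.2, q.2⟫_A :=
    fun p q => WithCStarModule.prod_inner p q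
  -- uniqueness of the decomposition
  have huniq : ∀ (p g : C⋆ᵐᵒᵈ(A, M × N)), (g.2 : N) = T g.1 →
      (∀ g' : C⋆ᵐᵒᵈ(A, M × N), (g'.2 : N) = T g'.1 → ⟪p - g, g'⟫_A = 0) → P p = g := by
    intro p g hg hz
    have hw : ((P p - g).2 : N) = T (P p - g).1 := by
      show (P p).2 - g.2 = T ((P p).1 - g.1)
      rw [map_sub, hPg p, hg]
    have h0 : ⟪P p - g, P p - g⟫_A = 0 := by
      calc ⟪P p - g, P p - g⟫_A = ⟪p - g, P p - g⟫_A - ⟪Z p, P p - g⟫_A := by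
            rw [← CStarModule.inner_sub_left]; congr 1; rw [hZ']; abel
        _ = 0 := by rw [hz _ hw, hZ _ _ hw, sub_zero]
    have := CStarModule.inner_self.mp h0
    rwa [sub_eq_zero] at this
  -- graph elements are fixed by P
  have hProj : ∀ g : C⋆ᵐᵒᵈ(A, M × N), (g.2 : N) = T g.1 → P g = g := by
    intro g hg
    exact huniq g g hg (fun g' _ => by rw [sub_self]; exact CStarModule.inner_zero_left)
  -- P is additive
  have hPadd : ∀ p q : C⋆ᵐᵒᵈ(A, M × N), P (p + q) = P p + P q := by
    intro p q
    refine huniq _ _ ?_ ?_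
    · show (P p).2 + (P q).2 = T ((P p).1 + (P q).1)
      rw [map_add, hPg p, hPg q]
    · intro g' hg'
      have h : p + q - (P p + P q) = Z p + Z q := by rw [hZ', hZ']; abel
      rw [h, CStarModule.inner_add_left, hZ _ _ hg', hZ _ _ hg', add_zero]
  -- P commutes with ℂ-scalars
  have hPsmulC : ∀ (c : ℂ) (p : C⋆ᵐᵒᵈ(A, M × N)), P (c • p) = c • P p := by
    intro c p
    refine huniq _ _ ?_ ?_
    · show c • (P p).2 = T (c • (P p).1)
      rw [map_smul, hPg p]
    · intro g' hg'
      have h : c • p - c • P p = c • Z p := by rw [hZ', smul_sub]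
      rw [h, CStarModule.inner_smul_left_complex, hZ _ _ hg', smul_zero]
  -- P commutes with the A-action
  have hPsmulA : ∀ (a : A) (p : C⋆ᵐᵒᵈ(A, M × N)),
      P (a • p) = a • P p := by
    intro a p
    refine huniq _ _ ?_ ?_
    · show a • (P p).2 = T (a • (P p).1)
      rw [hT, hPg p]
    · intro g' hg'
      have h : a • p - a • P p = a • Z p := by
        rw [hZ', my_op_smul_sub]
      rw [h]
      calc ⟪a • Z p, g'⟫_A = ⟪Z p, g'⟫_A * star a :=
            CStarModule.inner_op_smul_left
        _ = 0 := by rw [hZ _ _ hg', zero_mul]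
  -- P is "self-adjoint"
  have hPsa : ∀ p q : C⋆ᵐᵒᵈ(A, M × N), ⟪P p, q⟫_A = ⟪p, P q⟫_A := by
    intro p q
    have h1 : ⟪P p, Z q⟫_A = 0 := by
      rw [← CStarModule.star_inner, hZ _ _ (hPg p), star_zero]
    have h2 : ⟪Z p, P q⟫_A = 0 := hZ _ _ (hPg q)
    calc ⟪P p, q⟫_A = ⟪P p, P q + Z q⟫_A := by rw [← hPZ q]
      _ = ⟪P p, P q⟫_A + ⟪P p, Z q⟫_A := CStarModule.inner_add_right
      _ = ⟪P p, P q⟫_A := by rw [h1, add_zero]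
      _ = ⟪P p, P q⟫_A + ⟪Z p, P q⟫_A := by rw [h2, add_zero]
      _ = ⟪P p + Z p, P q⟫_A := (CStarModule.inner_add_left).symm
      _ = ⟪p, P q⟫_A := by rw [← hPZ p]
  -- components
  set ι₁ : M → C⋆ᵐᵒᵈ(A, M × N) := fun m => (equiv A (M × N)).symm (m, 0) with hι₁def
  set ι₂ : N → C⋆ᵐᵒᵈ(A, M × N) := fun y => (equiv A (M × N)).symm (0, y) with hι₂def
  set α : M → M := fun m => (P (ι₁ m)).1 with hαdef
  set β : N → M := fun y => (P (ι₂ y)).1 with hβdef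
  have hPι₁ : ∀ m : M, ((P (ι₁ m)).2 : N) = T (α m) := fun m => hPg (ι₁ m)
  have hPι₂ : ∀ y : N, ((P (ι₂ y)).2 : N) = T (β y) := fun y => hPg (ι₂ y)
  -- identity (I1)
  have hI1 : ∀ m m' : M, ⟪m - α m, m'⟫_A = ⟪T (α m), T m'⟫_A := by
    intro m m'
    have hg' : (((equiv A (M × N)).symm (m', T m') : C⋆ᵐᵒᵈ(A, M × N)).2 : N)
        = T ((equiv A (M × N)).symm (m', T m') : C⋆ᵐᵒᵈ(A, M × N)).1 := rfl
    have h0 := hZ (ι₁ m) _ hg'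
    rw [hZ', hinn] at h0
    have hfst : ((ι₁ m - P (ι₁ m)).1 : M) = m - α m := rfl
    have hsnd : ((ι₁ m - P (ι₁ m)).2 : N) = 0 - T (α m) := by
      show (0 : N) - (P (ι₁ m)).2 = 0 - T (α m)
      rw [hPι₁]
    rw [hfst, hsnd] at h0
    have h1 : ⟪m - α m, m'⟫_A + ⟪(0 : N) - T (α m), T m'⟫_A = 0 := h0
    rw [zero_sub, CStarModule.inner_neg_left] at h1
    rwa [add_neg_eq_zero] at h1
  -- identity (I2)
  have hI2 : ∀ (m : M) (y : N), ⟪T (α m), y⟫_A = ⟪m, β y⟫_A := by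
    intro m y
    have h := hPsa (ι₁ m) (ι₂ y)
    rw [hinn, hinn] at h
    have h1 : ((P (ι₁ m)).1 : M) = α m := rfl
    have h2 : ((ι₂ y).1 : M) = 0 := rfl
    have h3 : ((ι₂ y).2 : N) = y := rfl
    have h4 : ((ι₁ m).1 : M) = m := rfl
    have h5 : ((ι₁ m).2 : N) = 0 := rfl
    have h6 : ((P (ι₂ y)).1 : M) = β y := rfl
    rw [h1, h2, h3, h4, h5, h6, hPι₁, hPι₂] at h
    simpa using h
  -- α is self-adjoint
  have hαsa : ∀ m m' : M, ⟪α m, m'⟫_A = ⟪m, α m'⟫_A := by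
    intro m m'
    have h := hPsa (ι₁ m) (ι₁ m')
    rw [hinn, hinn] at h
    have h1 : ((P (ι₁ m)).1 : M) = α m := rfl
    have h2 : ((ι₁ m').1 : M) = m' := rfl
    have h3 : ((ι₁ m').2 : N) = 0 := rfl
    have h4 : ((ι₁ m).1 : M) = m := rfl
    have h5 : ((ι₁ m).2 : N) = 0 := rfl
    have h6 : ((P (ι₁ m')).1 : M) = α m' := rfl
    rw [h1, h2, h3, h4, h5, h6] at h
    simpa using h
  -- positivity
  have hαpos : ∀ m : M, (0 : A) ≤ ⟪α m, m⟫_A := by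
    intro m
    have h : ⟪P (ι₁ m), ι₁ m⟫_A = ⟪α m, m⟫_A := by
      rw [hinn]
      have h1 : ((P (ι₁ m)).1 : M) = α m := rfl
      have h4 : ((ι₁ m).1 : M) = m := rfl
      have h5 : ((ι₁ m).2 : N) = 0 := rfl
      rw [h1, h4, h5]
      simp
    have h2 : ⟪P (ι₁ m), ι₁ m⟫_A = ⟪P (ι₁ m), P (ι₁ m)⟫_A := by
      calc ⟪P (ι₁ m), ι₁ m⟫_A = ⟪P (ι₁ m), P (ι₁ m) + Z (ι₁ m)⟫_A := by rw [← hPZ]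
        _ = ⟪P (ι₁ m), P (ι₁ m)⟫_A + ⟪P (ι₁ m), Z (ι₁ m)⟫_A := CStarModule.inner_add_right
        _ = ⟪P (ι₁ m), P (ι₁ m)⟫_A := by
            rw [← CStarModule.star_inner (Z (ι₁ m)), hZ _ _ (hPg (ι₁ m)), star_zero, add_zero]
    rw [← h, h2]
    exact CStarModule.inner_self_nonneg
  -- linearity of ι₁, ι₂
  have hι₁add : ∀ m m' : M, ι₁ (m + m') = ι₁ m + ι₁ m' := by
    intro m m'
    rw [hι₁def]
    show (equiv A (M × N)).symm (m + m', 0) = _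
    rw [← WithCStarModule.equiv_symm_add, Prod.mk_add_mk, add_zero]
  have hι₂add : ∀ y y' : N, ι₂ (y + y') = ι₂ y + ι₂ y' := by
    intro y y'
    rw [hι₂def]
    show (equiv A (M × N)).symm (0, y + y') = _
    rw [← WithCStarModule.equiv_symm_add, Prod.mk_add_mk, add_zero]
  have hι₁smul : ∀ (c : ℂ) (m : M), ι₁ (c • m) = c • ι₁ m := by
    intro c m
    rw [hι₁def]
    show (equiv A (M × N)).symm (c • m, 0) = _
    rw [← WithCStarModule.equiv_symm_smul, Prod.smul_mk, smul_zero]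
  have hι₂smul : ∀ (c : ℂ) (y : N), ι₂ (c • y) = c • ι₂ y := by
    intro c y
    rw [hι₂def]
    show (equiv A (M × N)).symm (0, c • y) = _
    rw [← WithCStarModule.equiv_symm_smul, Prod.smul_mk, smul_zero]
  have hι₁smulA : ∀ (a : A) (m : M),
      ι₁ (a • m) = a • ι₁ m := by
    intro a m
    rw [hι₁def]
    show (equiv A (M × N)).symm (a • m, 0) = _
    have : (a • m, (0 : N)) = a • ((m, 0) : M × N) := by
      rw [Prod.smul_mk, my_op_smul_zero]
    rw [this]
    rfl
  have hι₂smulA : ∀ (a : A) (y : N),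
      ι₂ (a • y) = a • ι₂ y := by
    intro a y
    rw [hι₂def]
    show (equiv A (M × N)).symm (0, a • y) = _
    have : ((0 : M), a • y) = a • (((0 : M), y) : M × N) := by
      rw [Prod.smul_mk, my_op_smul_zero]
    rw [this]
    rfl
  -- linearity of α, β
  have hαadd : ∀ m m' : M, α (m + m') = α m + α m' := by
    intro m m'
    show (P (ι₁ (m + m'))).1 = (P (ι₁ m)).1 + (P (ι₁ m')).1
    rw [hι₁add, hPadd]
    rfl
  have hαsmul : ∀ (c : ℂ) (m : M), α (c • m) = c • α m := by
    intro c m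
    show (P (ι₁ (c • m))).1 = c • (P (ι₁ m)).1
    rw [hι₁smul, hPsmulC]
    rfl
  have hαsmulA : ∀ (a : A) (m : M), α (a • m) = a • α m := by
    intro a m
    show (P (ι₁ (a • m))).1 = a • (P (ι₁ m)).1
    rw [hι₁smulA, hPsmulA]
    rfl
  have hβadd : ∀ y y' : N, β (y + y') = β y + β y' := by
    intro y y'
    show (P (ι₂ (y + y'))).1 = (P (ι₂ y)).1 + (P (ι₂ y')).1
    rw [hι₂add, hPadd]
    rfl
  have hβsmul : ∀ (c : ℂ) (y : N), β (c • y) = c • β y := by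
    intro c y
    show (P (ι₂ (c • y))).1 = c • (P (ι₂ y)).1
    rw [hι₂smul, hPsmulC]
    rfl
  have hβsmulA : ∀ (a : A) (y : N), β (a • y) = a • β y := by
    intro a y
    show (P (ι₂ (a • y))).1 = a • (P (ι₂ y)).1
    rw [hι₂smulA, hPsmulA]
    rfl
  -- norm bound on P
  have hPnorm : ∀ p : C⋆ᵐᵒᵈ(A, M × N), ‖P p‖ ≤ ‖p‖ := by
    intro p
    have hsq : ‖P p‖^2 ≤ ‖p‖ * ‖P p‖ := by
      have h1 : ⟪p, P p⟫_A = ⟪P p, P p⟫_A := by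
        calc ⟪p, P p⟫_A = ⟪P p + Z p, P p⟫_A := by rw [← hPZ]
          _ = ⟪P p, P p⟫_A + ⟪Z p, P p⟫_A := CStarModule.inner_add_left
          _ = ⟪P p, P p⟫_A := by rw [hZ _ _ (hPg p), add_zero]
      calc ‖P p‖^2 = ‖⟪P p, P p⟫_A‖ := CStarModule.norm_sq_eq A
        _ = ‖⟪p, P p⟫_A‖ := by rw [h1]
        _ ≤ ‖p‖ * ‖P p‖ := CStarModule.norm_inner_le _
    nlinarith [norm_nonneg p, norm_nonneg (P p)]
  -- norm bound on β
  have hβnorm : ∀ y : N, ‖β y‖ ≤ 1 * ‖y‖ := by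
    intro y
    have h1 : ‖β y‖ ≤ ‖P (ι₂ y)‖ :=
      le_trans (le_max_left _ _) (WithCStarModule.max_le_prod_norm (P (ι₂ y)))
    have h2 : ‖ι₂ y‖ ≤ ‖y‖ := by
      refine le_trans (WithCStarModule.prod_norm_le_norm_add (ι₂ y)) ?_
      have h3 : ((ι₂ y).1 : M) = 0 := rfl
      have h4 : ((ι₂ y).2 : N) = y := rfl
      rw [h3, h4]
      simp
    rw [one_mul]
    exact le_trans h1 (le_trans (hPnorm _) h2)
  -- the key norm estimate
  set Q : ℝ := ‖T‖^2 with hQdef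
  have hQ0 : (0:ℝ) ≤ Q := sq_nonneg _
  have h1Q : (0:ℝ) < 1 + Q := by linarith
  have hkey : ∀ m : M, ‖m‖ ≤ 1 → ‖m - α m‖^2 * (1 + Q) ≤ Q := by
    intro m hm
    set w : M := m - α m with hwdef
    set b : A := ⟪w, w⟫_A with hbdef
    set c : A := ⟪w, m⟫_A with hcdef
    set t : ℝ := ‖b‖ with htdef
    have hb0 : (0:A) ≤ b := CStarModule.inner_self_nonneg
    have ht : ‖w‖^2 = t := CStarModule.norm_sq_eq A
    have ht0 : (0:ℝ) ≤ t := norm_nonneg _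
    set K : ℝ := Q * t with hKdef
    have hK0 : (0:ℝ) ≤ K := mul_nonneg hQ0 ht0
    have hbb : b = ⟪T (α m), T w⟫_A := hI1 m w
    have hstarb : star b = b := CStarModule.isSelfAdjoint_inner_self
    have hcb : ⟪T (α m), T (α m)⟫_A = c - b := by
      rw [hbdef, hcdef, ← CStarModule.inner_sub_right, hwdef, sub_sub_cancel]
      exact (hI1 m (α m)).symm
    have hcb0 : (0:A) ≤ c - b := hcb ▸ CStarModule.inner_self_nonneg
    have hCS : b * b ≤ ‖T w‖^2 • (c - b) := by
      have h := CStarModule.inner_mul_inner_swap_le (A := A) (x := T w) (y := T (α m))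
      rw [← hbb] at h
      rw [show ⟪T w, T (α m)⟫_A = star b by
        rw [hbb]; exact (CStarModule.star_inner _ _).symm] at h
      rwa [hstarb, hcb] at h
    have hTw : ‖T w‖^2 ≤ K := by
      have h := T.le_opNorm w
      have h2 : ‖T w‖^2 ≤ (‖T‖ * ‖w‖)^2 := by
        apply pow_le_pow_left₀ (norm_nonneg _) h
      rw [mul_pow, ht] at h2
      exact h2
    have hCS2 : b * b ≤ K • (c - b) := by
      refine le_trans hCS (smul_le_smul_of_nonneg_right hTw hcb0)
    have hcm : c ≤ ⟪m, m⟫_A := by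
      rw [← sub_nonneg]
      have h5 : ⟪m, m⟫_A - c = ⟪α m, m⟫_A := by
        rw [hcdef, ← CStarModule.inner_sub_left, hwdef, sub_sub_cancel]
      rw [h5]
      exact hαpos m
    have hchain : b * b + K • b ≤ K • ⟪m, m⟫_A := by
      have h1 : b * b + K • b ≤ K • (c - b) + K • b := add_le_add_left hCS2 _
      have h2 : K • (c - b) + K • b = K • c := by rw [smul_sub]; abel
      rw [h2] at h1
      exact le_trans h1 (smul_le_smul_of_nonneg_left hcm hK0)
    have hpos : (0:A) ≤ b * b + K • b := by
      have h1 : (0:A) ≤ b * b := by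
        have := star_mul_self_nonneg b
        rwa [hstarb] at this
      exact add_nonneg h1 (smul_nonneg hK0 hb0)
    have hupper : ‖b * b + K • b‖ ≤ K := by
      calc ‖b * b + K • b‖ ≤ ‖K • ⟪m, m⟫_A‖ :=
            CStarAlgebra.norm_le_norm_of_nonneg_of_le hpos hchain
        _ = K * ‖⟪m, m⟫_A‖ := by rw [norm_smul, Real.norm_of_nonneg hK0]
        _ = K * ‖m‖^2 := by rw [CStarModule.norm_sq_eq A]
        _ ≤ K * 1 := by
            refine mul_le_mul_of_nonneg_left ?_ hK0
            calc ‖m‖^2 ≤ 1^2 := by apply pow_le_pow_left₀ (norm_nonneg _) hm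
              _ = 1 := one_pow 2
        _ = K := mul_one K
    have hlower : t^2 + K * t ≤ ‖b * b + K • b‖ := aux_norm_lower b hb0 K
    have hfin : t^2 + K * t ≤ K := le_trans hlower hupper
    rw [ht]
    rw [hKdef] at hfin
    exact aux_arith ht0 hQ0 (by linarith [hfin])
  -- Lipschitz bound for m ↦ m - α m
  set s : ℝ := Real.sqrt (Q / (1 + Q)) with hsdef
  have hs0 : (0:ℝ) ≤ s := Real.sqrt_nonneg _
  have hssq : s^2 = Q / (1 + Q) := Real.sq_sqrt (div_nonneg hQ0 (le_of_lt h1Q))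
  have hs1 : s < 1 := by
    rw [show (1:ℝ) = Real.sqrt 1 by simp [Real.sqrt_one], hsdef]
    apply Real.sqrt_lt_sqrt (div_nonneg hQ0 (le_of_lt h1Q))
    rw [div_lt_one h1Q]
    linarith
  have hα0 : α 0 = 0 := by
    have hι0 : ι₁ 0 = 0 := by
      rw [hι₁def]
      rfl
    show (P (ι₁ 0)).1 = 0
    rw [hι0, hProj 0 (by show (0:N) = T 0; rw [map_zero])]
    rfl
  have hulip : ∀ m : M, ‖m - α m‖ ≤ s * ‖m‖ := by
    intro m
    rcases eq_or_ne m 0 with rfl | hm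
    · rw [hα0]
      simp
    · have hmn : (0:ℝ) < ‖m‖ := norm_pos_iff.mpr hm
      set c : ℂ := ((‖m‖⁻¹ : ℝ) : ℂ) with hcdef
      set m' : M := c • m with hm'def
      have hm'norm : ‖m'‖ = 1 := by
        rw [hm'def, norm_smul, hcdef]
        simp [Complex.norm_real, abs_of_pos (inv_pos.mpr hmn)]
        exact inv_mul_cancel₀ (ne_of_gt hmn)
      have hkey' := hkey m' (le_of_eq hm'norm)
      have hdiff : m' - α m' = c • (m - α m) := by
        rw [hm'def, hαsmul, smul_sub]
      rw [hdiff, norm_smul] at hkey'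
      have hcnorm : ‖c‖ = ‖m‖⁻¹ := by
        rw [hcdef]
        simp [abs_of_pos (inv_pos.mpr hmn)]
      rw [hcnorm] at hkey'
      -- hkey' : (‖m‖⁻¹ * ‖m - α m‖)^2 * (1 + Q) ≤ Q
      have hne : ‖m‖ ≠ 0 := ne_of_gt hmn
      have hsq : ‖m - α m‖^2 ≤ (s * ‖m‖)^2 := by
        rw [mul_pow, hssq, div_mul_eq_mul_div, le_div_iff₀ h1Q]
        have h1 : ‖m‖⁻¹^2 * ‖m - α m‖^2 * (1 + Q) ≤ Q := by
          rw [← mul_pow]; exact hkey'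
        calc ‖m - α m‖^2 * (1 + Q)
            = (‖m‖⁻¹^2 * ‖m - α m‖^2 * (1 + Q)) * ‖m‖^2 := by field_simp
          _ ≤ Q * ‖m‖^2 := mul_le_mul_of_nonneg_right h1 (sq_nonneg _)
      exact (abs_le_of_sq_le_sq' hsq (by positivity)).2
  -- bundle everything
  let uL : M →ₗ[ℂ] M :=
    { toFun := fun m => m - α m
      map_add' := fun m m' => by
        show m + m' - α (m + m') = (m - α m) + (m' - α m')
        rw [hαadd]; abel
      map_smul' := fun c m => by
        show c • m - α (c • m) = c • (m - α m)
        rw [hαsmul, smul_sub] }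
  let uC : M →L[ℂ] M := uL.mkContinuous s hulip
  have huCnorm : ‖uC‖ ≤ s := LinearMap.mkContinuous_norm_le uL hs0 hulip
  have huClt : ‖uC‖ < 1 := lt_of_le_of_lt huCnorm hs1
  let W : (M →L[ℂ] M)ˣ := Units.oneSub uC huClt
  have hWval : ∀ m : M, (W : M →L[ℂ] M) m = α m := by
    intro m
    show ((1 : M →L[ℂ] M) - uC) m = α m
    rw [ContinuousLinearMap.sub_apply, ContinuousLinearMap.one_apply]
    show m - (m - α m) = α m
    abel
  let ainv : M →L[ℂ] M := ↑W⁻¹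
  have hA1 : ∀ m : M, α (ainv m) = m := by
    intro m
    rw [← hWval]
    have := DFunLike.congr_fun W.mul_inv m
    rwa [ContinuousLinearMap.mul_apply, ContinuousLinearMap.one_apply] at this
  have hA2 : ∀ m : M, ainv (α m) = m := by
    intro m
    conv_lhs => rw [← hWval]
    have := DFunLike.congr_fun W.inv_mul m
    rwa [ContinuousLinearMap.mul_apply, ContinuousLinearMap.one_apply] at this
  have hainv_sa : ∀ (x w : M), ⟪ainv x, w⟫_A = ⟪x, ainv w⟫_A := by
    intro x w
    calc ⟪ainv x, w⟫_A = ⟪ainv x, α (ainv w)⟫_A := by rw [hA1]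
      _ = ⟪α (ainv x), ainv w⟫_A := (hαsa _ _).symm
      _ = ⟪x, ainv w⟫_A := by rw [hA1]
  have hainv_A : ∀ (a : A) (w : M),
      ainv (a • w) = a • ainv w := by
    intro a w
    calc ainv (a • w) = ainv (a • α (ainv w)) := by rw [hA1]
      _ = ainv (α (a • ainv w)) := by rw [hαsmulA]
      _ = a • ainv w := hA2 _
  let βL : N →ₗ[ℂ] M :=
    { toFun := β
      map_add' := hβadd
      map_smul' := fun c y => by simp only [RingHom.id_apply]; exact hβsmul c y }
  let βC : N →L[ℂ] M := βL.mkContinuous 1 hβnorm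
  refine ⟨ainv.comp βC, ?_, ?_⟩
  · intro a y
    show ainv (βL (a • y)) = a • ainv (βL y)
    show ainv (β (a • y)) = a • ainv (β y)
    rw [hβsmulA, hainv_A]
  · intro x y
    have h1 := hI2 (ainv x) y
    rw [hA1] at h1
    calc ⟪T x, y⟫_A = ⟪ainv x, β y⟫_A := h1
      _ = ⟪x, ainv (β y)⟫_A := hainv_sa _ _
      _ = ⟪x, (ainv.comp βC) y⟫_A := rfl
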